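/- Let f : ℂⁿ → ℂ be a mixed polynomial, write g = Re f and h = Im f, and let z ∈ ℂⁿ with z ≠ 0. Then the vectors ∇g(z), ∇h(z) and z are ℝ-linearly dependent in ℂⁿ (equivalently, the fibre f⁻¹(f(z)) does not intersect the sphere of radius ‖z‖ transversally at z) if and only if there exist μ ∈ ℂ \ {0} and λ ∈ ℝ such that λ·z = μ·conj(df)(z,z̄) + conj(μ)·∂̄f(z,z̄). -/

import Mathlib

open Complex Filter Finset

noncomputable section

abbrev MixedCoeff (n : ℕ) := ((Fin n → ℕ) × (Fin n → ℕ)) →₀ ℂ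

namespace Mixed

variable {n : ℕ}

/-- Evaluation of a mixed polynomial given by its coefficient function `c`:
`f(z) = Σ c(ν,μ) zᵛ z̄ᵘ`. -/
def eval (c : MixedCoeff n) (z : Fin n → ℂ) : ℂ :=
  c.sum fun p a => a * (∏ i, z i ^ p.1 i) * ∏ i, (starRingEnd ℂ) (z i) ^ p.2 i

/-- `∂f/∂z_i` evaluated at `(z, z̄)`. -/
def dz (c : MixedCoeff n) (i : Fin n) (z : Fin n → ℂ) : ℂ :=
  c.sum fun p a => a * (p.1 i) * (∏ j, z j ^ (p.1 j - if j = i then 1 else 0)) *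
    ∏ j, (starRingEnd ℂ) (z j) ^ p.2 j

/-- `∂f/∂z̄_i` evaluated at `(z, z̄)`. -/
def dzbar (c : MixedCoeff n) (i : Fin n) (z : Fin n → ℂ) : ℂ :=
  c.sum fun p a => a * (p.2 i) * (∏ j, z j ^ p.1 j) *
    ∏ j, (starRingEnd ℂ) (z j) ^ (p.2 j - if j = i then 1 else 0)

/-- The singular locus of `f` as a real map `ℝ²ⁿ → ℝ²`. -/
def Sing (c : MixedCoeff n) : Set (Fin n → ℂ) :=
  {z | ¬ Function.Surjective ⇑(fderiv ℝ (eval c) z)}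

/-- The Milnor set `M(f)`. -/
def Milnor (c : MixedCoeff n) : Set (Fin n → ℂ) :=
  {z | ∃ (l : ℝ) (m : ℂ), m ≠ 0 ∧
    ∀ i, (l : ℂ) * z i = m * (starRingEnd ℂ) (dz c i z) + (starRingEnd ℂ) m * dzbar c i z}

/-- The set `S(f)` of asymptotic ρ-nonregular values. -/
def Sset (c : MixedCoeff n) : Set ℂ :=
  {v | ∃ zk : ℕ → (Fin n → ℂ), (∀ k, zk k ∈ Milnor c) ∧
    Tendsto (fun k => ‖zk k‖) atTop atTop ∧
    Tendsto (fun k => eval c (zk k)) atTop (nhds v)}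

/-- The point of `ℝⁿ` attached to the exponent pair `(ν,μ)`, namely `ν+μ`. -/
def suppPt (p : (Fin n → ℕ) × (Fin n → ℕ)) : Fin n → ℝ := fun i => ((p.1 i + p.2 i : ℕ) : ℝ)

/-- The support of `f`, as a subset of `ℝⁿ`. -/
def suppPts (c : MixedCoeff n) : Set (Fin n → ℝ) := suppPt '' (c.support : Set _)

/-- The Newton polyhedron `Γ₀(f)`: convex hull of `{0} ∪ supp(f)`. -/
def Gamma0 (c : MixedCoeff n) : Set (Fin n → ℝ) := convexHull ℝ (insert 0 (suppPts c))

/-- `supp(f)‾`: the convex hull of `supp(f) \ {0}`. -/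
def suppBar (c : MixedCoeff n) : Set (Fin n → ℝ) := convexHull ℝ (suppPts c \ {0})

/-- `F` is a face of the (compact convex) set `C`: either `C` itself or the set of
minimizers on `C` of a linear functional, and nonempty. -/
def IsFaceOf (C F : Set (Fin n → ℝ)) : Prop :=
  F.Nonempty ∧ (F = C ∨ ∃ a : Fin n → ℝ,
    F = {x ∈ C | ∀ y ∈ C, ∑ i, a i * x i ≤ ∑ i, a i * y i})

/-- `Δ` is a face of the Newton boundary at infinity `Γ⁺(f)`: a face of `Γ₀(f)` not
containing the origin. -/
def IsGammaPlusFace (c : MixedCoeff n) (Δ : Set (Fin n → ℝ)) : Prop :=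
  IsFaceOf (Gamma0 c) Δ ∧ (0 : Fin n → ℝ) ∉ Δ

/-- `Γ⁺(f)` as a subset of `ℝⁿ`: the union of the faces of `Γ₀(f)` not containing `0`. -/
def GammaPlusSet (c : MixedCoeff n) : Set (Fin n → ℝ) :=
  {x | ∃ Δ, IsGammaPlusFace c Δ ∧ x ∈ Δ}

/-- The truncation `f_Δ` of `f` to a subset `Δ ⊆ ℝⁿ`. -/
def trunc (c : MixedCoeff n) (Δ : Set (Fin n → ℝ)) : MixedCoeff n :=
  @Finsupp.filter _ _ _ (fun p => suppPt p ∈ Δ) (Classical.decPred _) c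

/-- Newton non-degeneracy: for every face `Δ` of `Γ⁺(f)`,
`Sing f_Δ ∩ f_Δ⁻¹(0) ∩ (ℂ*)ⁿ = ∅`. -/
def NewtonNonDeg (c : MixedCoeff n) : Prop :=
  ∀ Δ, IsGammaPlusFace c Δ → ∀ z : Fin n → ℂ, (∀ i, z i ≠ 0) →
    eval (trunc c Δ) z = 0 → z ∉ Sing (trunc c Δ)

/-- Newton strong non-degeneracy: for every face `Δ` of `Γ⁺(f)`,
`Sing f_Δ ∩ (ℂ*)ⁿ = ∅`. -/
def NewtonStronglyNonDeg (c : MixedCoeff n) : Prop :=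
  ∀ Δ, IsGammaPlusFace c Δ → ∀ z : Fin n → ℂ, (∀ i, z i ≠ 0) →
    z ∉ Sing (trunc c Δ)

/-- `Δ` is a bad face of `supp(f)‾`. -/
def IsBadFace (c : MixedCoeff n) (Δ : Set (Fin n → ℝ)) : Prop :=
  IsFaceOf (suppBar c) Δ ∧ (0 : Fin n → ℝ) ∈ affineSpan ℝ Δ ∧
    ∃ a : Fin n → ℝ, (∃ i, a i < 0) ∧ (∃ j, 0 < a j) ∧
      {x ∈ suppBar c | ∑ i, a i * x i = 0} = Δ

/-- `f` depends effectively on all its variables. -/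
def EffectiveAll (c : MixedCoeff n) : Prop :=
  ∀ i, ∃ p ∈ c.support, 0 < p.1 i + p.2 i

/-- The Euclidean norm on `ℂⁿ`. -/
def norm2 (v : Fin n → ℂ) : ℝ := Real.sqrt (∑ i, Complex.normSq (v i))

end Mixed

section Aux

open Mixed ContinuousLinearMap

variable {n : ℕ}

/-- Projection as an ℝ-CLM. -/
noncomputable def prj (i : Fin n) : (Fin n → ℂ) →L[ℝ] ℂ := ContinuousLinearMap.proj i

/-- Conjugated projection as an ℝ-CLM. -/
noncomputable def cprj (i : Fin n) : (Fin n → ℂ) →L[ℝ] ℂ :=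
  (Complex.conjCLE.toContinuousLinearMap).comp (prj i)

@[simp] lemma prj_apply (i : Fin n) (u : Fin n → ℂ) : prj i u = u i := rfl

@[simp] lemma cprj_apply (i : Fin n) (u : Fin n → ℂ) :
    cprj i u = (starRingEnd ℂ) (u i) := rfl

lemma hasFDerivAt_pow_comp {F : (Fin n → ℂ) → ℂ} {L : (Fin n → ℂ) →L[ℝ] ℂ}
    {z : Fin n → ℂ} (hF : HasFDerivAt F L z) (k : ℕ) :
    HasFDerivAt (fun z => F z ^ k) (((k : ℂ) * F z ^ (k - 1)) • L) z := by
  have h1 : HasFDerivAt (fun w : ℂ => w ^ k)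
      ((ContinuousLinearMap.smulRight (1 : ℂ →L[ℂ] ℂ)
        ((k : ℂ) * F z ^ (k - 1))).restrictScalars ℝ) (F z) :=
    ((hasDerivAt_pow k (F z)).hasFDerivAt).restrictScalars ℝ
  refine (h1.comp z hF).congr_fderiv ?_
  refine ContinuousLinearMap.ext fun u => ?_
  simp [smul_eq_mul]
  ring

lemma hasFDerivAt_factor (i : Fin n) (a b : ℕ) (z : Fin n → ℂ) :
    HasFDerivAt (fun z : Fin n → ℂ => z i ^ a * (starRingEnd ℂ) (z i) ^ b)
      ((((a : ℂ) * z i ^ (a - 1) * (starRingEnd ℂ) (z i) ^ b) • prj i)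
        + (((b : ℂ) * z i ^ a * (starRingEnd ℂ) (z i) ^ (b - 1)) • cprj i)) z := by
  have h1 : HasFDerivAt (fun z : Fin n → ℂ => z i ^ a) (((a : ℂ) * z i ^ (a - 1)) • prj i) z :=
    hasFDerivAt_pow_comp (prj i).hasFDerivAt a
  have h2 : HasFDerivAt (fun z : Fin n → ℂ => (starRingEnd ℂ) (z i) ^ b)
      (((b : ℂ) * (starRingEnd ℂ) (z i) ^ (b - 1)) • cprj i) z :=
    hasFDerivAt_pow_comp (cprj i).hasFDerivAt b
  refine (h1.mul h2).congr_fderiv ?_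
  refine ContinuousLinearMap.ext fun u => ?_
  simp [smul_eq_mul]
  ring

lemma prod_erase_pow (w : Fin n → ℂ) (ν : Fin n → ℕ) (i : Fin n) :
    (ν i : ℂ) * (w i ^ (ν i - 1) * ∏ j ∈ Finset.univ.erase i, w j ^ ν j)
      = (ν i : ℂ) * ∏ j, w j ^ (ν j - if j = i then 1 else 0) := by
  rcases Nat.eq_zero_or_pos (ν i) with h | h
  · simp [h]
  · congr 1
    rw [← Finset.mul_prod_erase Finset.univ
      (fun j => w j ^ (ν j - if j = i then 1 else 0)) (Finset.mem_univ i)]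
    simp only [if_pos rfl]
    congr 1
    refine Finset.prod_congr rfl fun j hj => ?_
    rw [if_neg (Finset.ne_of_mem_erase hj), Nat.sub_zero]

lemma hasFDerivAt_monomial (a : ℂ) (ν μ : Fin n → ℕ) (z : Fin n → ℂ) :
    HasFDerivAt
      (fun z : Fin n → ℂ => a * (∏ i, z i ^ ν i) * ∏ i, (starRingEnd ℂ) (z i) ^ μ i)
      (∑ i, ((a * (ν i) * (∏ j, z j ^ (ν j - if j = i then 1 else 0)) *
              ∏ j, (starRingEnd ℂ) (z j) ^ μ j) • prj i
        + (a * (μ i) * (∏ j, z j ^ ν j) *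
              ∏ j, (starRingEnd ℂ) (z j) ^ (μ j - if j = i then 1 else 0)) • cprj i)) z := by
  have hprod : HasFDerivAt
      (fun z : Fin n → ℂ => ∏ i, (z i ^ ν i * (starRingEnd ℂ) (z i) ^ μ i))
      (∑ i, (∏ j ∈ Finset.univ.erase i, (z j ^ ν j * (starRingEnd ℂ) (z j) ^ μ j)) •
        ((((ν i : ℂ) * z i ^ (ν i - 1) * (starRingEnd ℂ) (z i) ^ μ i) • prj i)
          + (((μ i : ℂ) * z i ^ ν i * (starRingEnd ℂ) (z i) ^ (μ i - 1)) • cprj i))) z :=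
    HasFDerivAt.finset_prod (fun i _ => hasFDerivAt_factor i (ν i) (μ i) z)
  have hfun : (fun z : Fin n → ℂ => a * (∏ i, z i ^ ν i) * ∏ i, (starRingEnd ℂ) (z i) ^ μ i)
      = (fun z : Fin n → ℂ => a * ∏ i, (z i ^ ν i * (starRingEnd ℂ) (z i) ^ μ i)) := by
    funext w
    rw [Finset.prod_mul_distrib, mul_assoc]
  rw [hfun]
  refine (hprod.const_mul a).congr_fderiv ?_
  refine ContinuousLinearMap.ext fun u => ?_
  simp only [ContinuousLinearMap.smul_apply, ContinuousLinearMap.sum_apply,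
    ContinuousLinearMap.add_apply, prj_apply, cprj_apply, smul_eq_mul]
  rw [Finset.mul_sum]
  refine Finset.sum_congr rfl fun i _ => ?_
  have e1 : ∏ j ∈ Finset.univ.erase i, (z j ^ ν j * (starRingEnd ℂ) (z j) ^ μ j)
      = (∏ j ∈ Finset.univ.erase i, z j ^ ν j) *
        ∏ j ∈ Finset.univ.erase i, (starRingEnd ℂ) (z j) ^ μ j := Finset.prod_mul_distrib
  have h1 := prod_erase_pow z ν i
  have h2 := prod_erase_pow (fun j => (starRingEnd ℂ) (z j)) μ i
  have h3 : (starRingEnd ℂ) (z i) ^ μ i * ∏ j ∈ Finset.univ.erase i, (starRingEnd ℂ) (z j) ^ μ j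
      = ∏ j, (starRingEnd ℂ) (z j) ^ μ j :=
    Finset.mul_prod_erase Finset.univ (fun j => (starRingEnd ℂ) (z j) ^ μ j) (Finset.mem_univ i)
  have h4 : z i ^ ν i * ∏ j ∈ Finset.univ.erase i, z j ^ ν j = ∏ j, z j ^ ν j :=
    Finset.mul_prod_erase Finset.univ (fun j => z j ^ ν j) (Finset.mem_univ i)
  rw [e1, ← h3, ← h4]
  linear_combination (a * ((starRingEnd ℂ) (z i) ^ μ i *
      ∏ j ∈ Finset.univ.erase i, (starRingEnd ℂ) (z j) ^ μ j) * u i) * h1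
    + (a * (z i ^ ν i * ∏ j ∈ Finset.univ.erase i, z j ^ ν j) * (starRingEnd ℂ) (u i)) * h2

lemma hasFDerivAt_eval (c : MixedCoeff n) (z : Fin n → ℂ) :
    HasFDerivAt (Mixed.eval c)
      (∑ i, (Mixed.dz c i z • prj i + Mixed.dzbar c i z • cprj i)) z := by
  have hsum : HasFDerivAt
      (fun z : Fin n → ℂ => ∑ p ∈ c.support,
        (c p * (∏ i, z i ^ p.1 i) * ∏ i, (starRingEnd ℂ) (z i) ^ p.2 i))
      (∑ p ∈ c.support, ∑ i,
        ((c p * (p.1 i) * (∏ j, z j ^ (p.1 j - if j = i then 1 else 0)) *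
              ∏ j, (starRingEnd ℂ) (z j) ^ p.2 j) • prj i
        + (c p * (p.2 i) * (∏ j, z j ^ p.1 j) *
              ∏ j, (starRingEnd ℂ) (z j) ^ (p.2 j - if j = i then 1 else 0)) • cprj i)) z :=
    HasFDerivAt.fun_sum fun p _ => hasFDerivAt_monomial (c p) p.1 p.2 z
  have hfun : Mixed.eval c = fun z : Fin n → ℂ => ∑ p ∈ c.support,
      (c p * (∏ i, z i ^ p.1 i) * ∏ i, (starRingEnd ℂ) (z i) ^ p.2 i) := by
    funext w
    rfl
  rw [hfun]
  refine hsum.congr_fderiv ?_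
  rw [Finset.sum_comm]
  refine Finset.sum_congr rfl fun i _ => ?_
  rw [Finset.sum_add_distrib, ← Finset.sum_smul, ← Finset.sum_smul]
  rfl

lemma fderiv_re_apply (c : MixedCoeff n) (z u : Fin n → ℂ) :
    fderiv ℝ (fun w => (Mixed.eval c w).re) z u
      = (∑ i, (Mixed.dz c i z * u i + Mixed.dzbar c i z * (starRingEnd ℂ) (u i))).re := by
  have h := (Complex.reCLM.hasFDerivAt.comp z (hasFDerivAt_eval c z))
  rw [show (fun w => (Mixed.eval c w).re) = (⇑Complex.reCLM ∘ Mixed.eval c) from rfl, h.fderiv]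
  simp

lemma fderiv_im_apply (c : MixedCoeff n) (z u : Fin n → ℂ) :
    fderiv ℝ (fun w => (Mixed.eval c w).im) z u
      = (∑ i, (Mixed.dz c i z * u i + Mixed.dzbar c i z * (starRingEnd ℂ) (u i))).im := by
  have h := (Complex.imCLM.hasFDerivAt.comp z (hasFDerivAt_eval c z))
  rw [show (fun w => (Mixed.eval c w).im) = (⇑Complex.imCLM ∘ Mixed.eval c) from rfl, h.fderiv]
  simp

lemma re_inner_eq (v w : Fin n → ℂ)
    (h : ∀ u : Fin n → ℂ, (∑ i, u i * (starRingEnd ℂ) (v i)).re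
        = (∑ i, u i * (starRingEnd ℂ) (w i)).re) : v = w := by
  have key : ∀ u : Fin n → ℂ, (∑ i, u i * (starRingEnd ℂ) (v i - w i)).re = 0 := by
    intro u
    have h' := h u
    simp only [map_sub, mul_sub, Finset.sum_sub_distrib, Complex.sub_re]
    linarith
  have h2 := key (fun i => v i - w i)
  simp only [Complex.mul_conj] at h2
  rw [← Complex.ofReal_sum, Complex.ofReal_re] at h2
  have h3 : ∀ i ∈ Finset.univ, Complex.normSq (v i - w i) = 0 :=
    (Finset.sum_eq_zero_iff_of_nonneg (fun i _ => Complex.normSq_nonneg _)).mp h2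
  funext i
  have := Complex.normSq_eq_zero.mp (h3 i (Finset.mem_univ i))
  exact sub_eq_zero.mp this

lemma re_term (a b u : ℂ) :
    (a * u + b * (starRingEnd ℂ) u).re = (u * (starRingEnd ℂ) ((starRingEnd ℂ) a + b)).re := by
  simp [Complex.mul_re, Complex.add_re, Complex.add_im]
  ring

lemma im_term (a b u : ℂ) :
    (a * u + b * (starRingEnd ℂ) u).im
      = (u * (starRingEnd ℂ) (Complex.I * (starRingEnd ℂ) a - Complex.I * b)).re := by
  simp [Complex.mul_re, Complex.mul_im, Complex.add_re, Complex.add_im, Complex.sub_re,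
    Complex.sub_im]
  ring

lemma combo (m A B : ℂ) :
    (m.re : ℂ) * ((starRingEnd ℂ) A + B)
      + (m.im : ℂ) * (Complex.I * (starRingEnd ℂ) A - Complex.I * B)
      = m * (starRingEnd ℂ) A + (starRingEnd ℂ) m * B := by
  apply Complex.ext <;>
    simp [Complex.add_re, Complex.add_im, Complex.mul_re, Complex.mul_im, Complex.sub_re,
      Complex.sub_im, Complex.I_re, Complex.I_im, Complex.conj_re, Complex.conj_im,
      Complex.ofReal_re, Complex.ofReal_im] <;> ring

end Aux

/-- Lemma 2.1: for a mixed polynomial `f` with `g = Re f`, `h = Im f`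
and `z ≠ 0`, the gradients `∇g(z)`, `∇h(z)` and the vector `z` are `ℝ`-linearly
dependent (equivalently, the fibre of `f` through `z` does not meet the sphere of
radius `‖z‖` transversally at `z`) iff there are `μ ∈ ℂ*` and `λ ∈ ℝ` with
`λ·z = μ·conj(df)(z,z̄) + conj(μ)·∂̄f(z,z̄)`. -/
theorem mixed_sphere_nontransversality_iff {n : ℕ} (c : MixedCoeff n) (z : Fin n → ℂ)
    (hz : z ≠ 0) (vg vh : Fin n → ℂ)
    (hg : ∀ u : Fin n → ℂ, fderiv ℝ (fun w => (Mixed.eval c w).re) z u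
        = (∑ i, u i * (starRingEnd ℂ) (vg i)).re)
    (hh : ∀ u : Fin n → ℂ, fderiv ℝ (fun w => (Mixed.eval c w).im) z u
        = (∑ i, u i * (starRingEnd ℂ) (vh i)).re) :
    (¬ LinearIndependent ℝ ![vg, vh, z]) ↔
      ∃ (l : ℝ) (m : ℂ), m ≠ 0 ∧ ∀ i, (l : ℂ) * z i
        = m * (starRingEnd ℂ) (Mixed.dz c i z) + (starRingEnd ℂ) m * Mixed.dzbar c i z := by
  have hvg : vg = fun i => (starRingEnd ℂ) (Mixed.dz c i z) + Mixed.dzbar c i z := by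
    refine re_inner_eq vg _ fun u => ?_
    rw [← hg u, fderiv_re_apply, Complex.re_sum, Complex.re_sum]
    exact Finset.sum_congr rfl fun i _ => re_term _ _ _
  have hvh : vh = fun i =>
      Complex.I * (starRingEnd ℂ) (Mixed.dz c i z) - Complex.I * Mixed.dzbar c i z := by
    refine re_inner_eq vh _ fun u => ?_
    rw [← hh u, fderiv_im_apply, Complex.im_sum, Complex.re_sum]
    exact Finset.sum_congr rfl fun i _ => im_term _ _ _
  rw [Fintype.not_linearIndependent_iff]
  constructor
  · rintro ⟨g, hsum, i0, hi0⟩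
    have hcomp : ∀ i, (g 0 : ℂ) * vg i + (g 1 : ℂ) * vh i + (g 2 : ℂ) * z i = 0 := by
      intro i
      have h := congrFun hsum i
      simpa [Fin.sum_univ_three, Complex.real_smul] using h
    set m : ℂ := (g 0 : ℂ) + (g 1 : ℂ) * Complex.I with hmdef
    have hre : (m.re : ℂ) = (g 0 : ℂ) := by simp [hmdef]
    have him : (m.im : ℂ) = (g 1 : ℂ) := by simp [hmdef]
    by_cases hm : m = 0
    · exfalso
      have hg0 : g 0 = 0 := by
        have := congrArg Complex.re hm; simpa [hmdef] using this
      have hg1 : g 1 = 0 := by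
        have := congrArg Complex.im hm; simpa [hmdef] using this
      have hg2 : g 2 ≠ 0 := by
        fin_cases i0 <;> simp_all
      apply hz
      funext i
      have h := hcomp i
      rw [hg0, hg1] at h
      simp only [Complex.ofReal_zero, zero_mul, zero_add] at h
      have : (g 2 : ℂ) ≠ 0 := by exact_mod_cast hg2
      exact (mul_eq_zero.mp h).resolve_left this
    · refine ⟨-(g 2), m, hm, fun i => ?_⟩
      rw [← combo m (Mixed.dz c i z) (Mixed.dzbar c i z), hre, him]
      have h := hcomp i
      rw [hvg, hvh] at h
      simp only at h
      push_cast
      linear_combination -h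
  · rintro ⟨l, m, hm, heq⟩
    have hne : m.re ≠ 0 ∨ m.im ≠ 0 := by
      by_contra h
      push_neg at h
      exact hm (Complex.ext_iff.mpr ⟨by simp [h.1], by simp [h.2]⟩)
    refine ⟨![m.re, m.im, -l], ?_, ?_⟩
    · funext i
      have hc := combo m (Mixed.dz c i z) (Mixed.dzbar c i z)
      have h := heq i
      simp only [Fin.sum_univ_three, Matrix.cons_val_zero, Matrix.cons_val_one,
        Matrix.head_cons, Matrix.cons_val_two, Matrix.tail_cons, Pi.add_apply,
        Pi.smul_apply, Complex.real_smul, hvg, hvh, Pi.zero_apply]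
      push_cast
      linear_combination hc - h
    · rcases hne with h | h
      · exact ⟨0, by simpa using h⟩
      · exact ⟨1, by simpa using h⟩
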